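/- (i) If b2 ≤ 1, then there is no κ ∈ K(Ad) with Re κ = 0 (equivalently, I(0) = +∞). (ii) If b2 > 1, then I(0) = (1/(2√b2))·log((√b2 + 1)/(√b2 − 1)), and the only structure B ∈ Ad with i·I(0) ∈ K(B) is the constant function B ≡ b2 (up to equality a.e.). -/

import Mathlib

open MeasureTheory Set Complex intervalIntegral

noncomputable section

/-- The Lebesgue measure restricted to the interval `(0,1)`. -/
def mu01 : Measure ℝ := volume.restrict (Set.Ioo 0 1)

/-- `y` (with derivative `y'`) is a `W^{2,∞}` solution of `y'' + z² B y = 0` on `(0,1)`: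
`y ∈ C¹[0,1]`, `y'` is Lipschitz (so `y'' ∈ L^∞` exists a.e.), and the equation holds a.e. -/
def IsW2Sol (B : ℝ → ℂ) (z : ℂ) (y y' : ℝ → ℂ) : Prop :=
  (∀ x ∈ Set.Icc (0:ℝ) 1, HasDerivWithinAt y (y' x) (Set.Icc (0:ℝ) 1) x) ∧
  (∃ L : NNReal, LipschitzOnWith L y' (Set.Icc (0:ℝ) 1)) ∧
  (∀ᵐ x ∂mu01, HasDerivAt y' (-(z^2) * B x * y x) x)

/-- `κ` is a quasi-eigenvalue of the structure `B`: `κ ≠ 0` and there is a nonzero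
`W^{2,∞}` solution of `y'' + κ² B y = 0` with `y'(0) = 0` and `κ y(1) = i y'(1)`. -/
def QuasiEigen (B : ℝ → ℂ) (κ : ℂ) : Prop :=
  κ ≠ 0 ∧ ∃ y y' : ℝ → ℂ, IsW2Sol B κ y y' ∧
    (∃ x ∈ Set.Icc (0:ℝ) 1, y x ≠ 0) ∧ y' 0 = 0 ∧ κ * y 1 = Complex.I * y' 1

/-- `y` is the solution `φ(·, z; B)` (normalized by `y(0)=1`, `y'(0)=0`). -/
def IsPhi (B : ℝ → ℂ) (z : ℂ) (y y' : ℝ → ℂ) : Prop :=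
  IsW2Sol B z y y' ∧ y 0 = 1 ∧ y' 0 = 0

/-- `y` is the solution `ψ(·, z; B)` (normalized by `y(0)=0`, `y'(0)=1`). -/
def IsPsi (B : ℝ → ℂ) (z : ℂ) (y y' : ℝ → ℂ) : Prop :=
  IsW2Sol B z y y' ∧ y 0 = 0 ∧ y' 0 = 1

/-- Membership of a real-valued structure in the admissible family `Ad`:
`B ∈ L^∞((0,1);ℝ)` with `b1 ≤ B(x) ≤ b2` a.e. on `(0,1)`. -/
def InAd (b1 b2 : ℝ) (B : ℝ → ℝ) : Prop :=
  AEStronglyMeasurable B mu01 ∧ ∀ᵐ x ∂mu01, b1 ≤ B x ∧ B x ≤ b2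

/-- The set `K(Ad)` of all quasi-eigenvalues of admissible structures. -/
def KAd (b1 b2 : ℝ) : Set ℂ :=
  {κ | ∃ B : ℝ → ℝ, InAd b1 b2 B ∧ QuasiEigen (fun x => ((B x : ℝ) : ℂ)) κ}


open Filter
open scoped Topology

lemma lipschitz_ftc {L : NNReal} {f f' : ℝ → ℝ} (hf : LipschitzWith L f)
    {a b : ℝ} (hab : a ≤ b)
    (hd : ∀ᵐ x ∂(volume.restrict (Ioo a b)), HasDerivAt f (f' x) x) :
    f b - f a = ∫ x in Ioo a b, f' x := by
  have hcont : Continuous f := hf.continuous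
  have hint : ∀ p q : ℝ, IntervalIntegrable f volume p q := fun p q =>
    hcont.intervalIntegrable p q
  set G : ℝ → ℝ := fun u => ∫ x in a..u, f x with hG
  have hGd : ∀ c : ℝ, HasDerivAt G (f c) c := fun c =>
    intervalIntegral.integral_hasDerivAt_right (hint a c)
      (hcont.stronglyMeasurableAtFilter _ _) hcont.continuousAt
  set h : ℕ → ℝ := fun n => 1 / (n + 1) with hh
  have hpos : ∀ n, 0 < h n := fun n => by positivity
  have hlim0 : Tendsto h atTop (𝓝 0) := tendsto_one_div_add_atTop_nhds_zero_nat
  set F : ℕ → ℝ → ℝ := fun n x => (f (x + h n) - f x) / h n with hF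
  -- sequence of points tending to c within ≠ c
  have hseq : ∀ c : ℝ, Tendsto (fun n => c + h n) atTop (𝓝[≠] c) := by
    intro c
    apply tendsto_nhdsWithin_of_tendsto_nhds_of_eventually_within
    · simpa using tendsto_const_nhds.add hlim0
    · exact Eventually.of_forall fun n => by
        simp [mem_compl_singleton_iff]
        exact ne_of_gt (by linarith [hpos n])
  have hslope : ∀ (g : ℝ → ℝ) (c d : ℝ), HasDerivAt g d c →
      Tendsto (fun n => (g (c + h n) - g c) / h n) atTop (𝓝 d) := by
    intro g c d hg
    have := (hasDerivAt_iff_tendsto_slope.1 hg).comp (hseq c)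
    refine this.congr fun n => ?_
    simp [Function.comp, slope_def_field]
  have key : ∀ n, ∫ x in Ioo a b, F n x
      = (G (b + h n) - G b) / h n - (G (a + h n) - G a) / h n := by
    intro n
    have e1 : ∫ x in Ioo a b, F n x = (∫ x in Ioo a b, (f (x + h n) - f x)) / h n := by
      simp only [hF, div_eq_mul_inv, MeasureTheory.integral_mul_const]
    have hint2 : IntervalIntegrable (fun x => f (x + h n)) volume a b :=
      (hcont.comp (continuous_id.add continuous_const)).intervalIntegrable a b
    have e2 : ∫ x in Ioo a b, (f (x + h n) - f x) = ∫ x in a..b, (f (x + h n) - f x) := by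
      rw [intervalIntegral.integral_of_le hab, integral_Ioc_eq_integral_Ioo]
    have e3 : ∫ x in a..b, (f (x + h n) - f x)
        = (∫ x in a..b, f (x + h n)) - ∫ x in a..b, f x :=
      intervalIntegral.integral_sub hint2 (hint a b)
    have e4 : (∫ x in a..b, f (x + h n)) = ∫ x in (a + h n)..(b + h n), f x :=
      intervalIntegral.integral_comp_add_right f (h n)
    have e5 : ∫ x in (a + h n)..(b + h n), f x = G (b + h n) - G (a + h n) := by
      have c1 := intervalIntegral.integral_add_adjacent_intervals
        (hint a (a + h n)) (hint (a + h n) (b + h n))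
      simp only [hG]
      linarith [c1]
    have e6 : ∫ x in a..b, f x = G b - G a := by
      simp [hG, intervalIntegral.integral_same]
    rw [e1, e2, e3, e4, e5, e6]
    ring
  -- limit of RHS
  have hRHS : Tendsto (fun n => ∫ x in Ioo a b, F n x) atTop (𝓝 (f b - f a)) := by
    have := (hslope G b (f b) (hGd b)).sub (hslope G a (f a) (hGd a))
    refine Tendsto.congr (fun n => (key n).symm) this
  -- limit via dominated convergence
  have hLHS : Tendsto (fun n => ∫ x in Ioo a b, F n x) atTop
      (𝓝 (∫ x in Ioo a b, f' x)) := by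
    refine MeasureTheory.tendsto_integral_of_dominated_convergence (fun _ => (L : ℝ))
      (fun n => (((hcont.comp (continuous_id.add continuous_const)).sub hcont).div_const
        _).aestronglyMeasurable) ?_ ?_ ?_
    · rw [integrable_const_iff]
      right
      constructor
      rw [Measure.restrict_apply_univ, Real.volume_Ioo]
      exact ENNReal.ofReal_lt_top
    · intro n
      refine Eventually.of_forall fun x => ?_
      have := hf.dist_le_mul (x + h n) x
      rw [Real.dist_eq, Real.dist_eq] at this
      simp only [add_sub_cancel_left] at this
      rw [Real.norm_eq_abs, hF, abs_div, abs_of_pos (hpos n)]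
      rw [div_le_iff₀ (hpos n)]
      calc |f (x + h n) - f x| ≤ L * |h n| := this
        _ = L * h n := by rw [abs_of_pos (hpos n)]
    · refine hd.mono fun x hx => ?_
      exact hslope f x (f' x) hx
  exact tendsto_nhds_unique hRHS hLHS


/-- FTC on a subinterval for functions Lipschitz on `Icc a b` with a.e. derivative. -/
lemma ftc_on {L : NNReal} {f f' : ℝ → ℝ} {a b : ℝ}
    (hf : LipschitzOnWith L f (Icc a b))
    (hd : ∀ᵐ x ∂(volume.restrict (Ioo a b)), HasDerivAt f (f' x) x)
    {x₁ x₂ : ℝ} (h₁ : x₁ ∈ Icc a b) (h₂ : x₂ ∈ Icc a b) (h12 : x₁ ≤ x₂) :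
    f x₂ - f x₁ = ∫ x in Ioo x₁ x₂, f' x := by
  obtain ⟨g, hg, hfg⟩ := hf.extend_real
  have hsub : Ioo x₁ x₂ ⊆ Ioo a b := Ioo_subset_Ioo h₁.1 h₂.2
  have hae : ∀ᵐ x ∂(volume.restrict (Ioo x₁ x₂)), HasDerivAt f (f' x) x :=
    ae_mono (Measure.restrict_mono hsub le_rfl) hd
  have hmem : ∀ᵐ x ∂(volume.restrict (Ioo x₁ x₂)), x ∈ Ioo x₁ x₂ :=
    ae_restrict_mem measurableSet_Ioo
  have hdg : ∀ᵐ x ∂(volume.restrict (Ioo x₁ x₂)), HasDerivAt g (f' x) x := by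
    filter_upwards [hae, hmem] with x hx hx2
    have hnb : Icc a b ∈ 𝓝 x := Icc_mem_nhds (lt_of_le_of_lt h₁.1 hx2.1)
      (lt_of_lt_of_le hx2.2 h₂.2)
    exact hx.congr_of_eventuallyEq (by filter_upwards [hnb] with y hy using (hfg hy).symm)
  have := lipschitz_ftc hg h12 hdg
  rwa [← hfg h₁, ← hfg h₂] at this

lemma antitone_of_deriv_nonpos_ae {L : NNReal} {f f' : ℝ → ℝ} {a b : ℝ}
    (hf : LipschitzOnWith L f (Icc a b))
    (hd : ∀ᵐ x ∂(volume.restrict (Ioo a b)), HasDerivAt f (f' x) x)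
    (hle : ∀ᵐ x ∂(volume.restrict (Ioo a b)), f' x ≤ 0)
    {x₁ x₂ : ℝ} (h₁ : x₁ ∈ Icc a b) (h₂ : x₂ ∈ Icc a b) (h12 : x₁ ≤ x₂) :
    f x₂ ≤ f x₁ := by
  have h := ftc_on hf hd h₁ h₂ h12
  have hsub : Ioo x₁ x₂ ⊆ Ioo a b := Ioo_subset_Ioo h₁.1 h₂.2
  have hle' : ∀ᵐ x ∂(volume.restrict (Ioo x₁ x₂)), f' x ≤ 0 :=
    ae_mono (Measure.restrict_mono hsub le_rfl) hle
  have : ∫ x in Ioo x₁ x₂, f' x ≤ 0 := integral_nonpos_of_ae hle'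
  linarith

/-- boundedness of a Lipschitz function on Icc 0 1 -/
lemma lip_bound {E : Type*} [NormedAddCommGroup E] {f : ℝ → E} {K : NNReal}
    (h : LipschitzOnWith K f (Icc 0 1)) :
    ∀ x ∈ Icc (0:ℝ) 1, ‖f x‖ ≤ ‖f 0‖ + K := by
  intro x hx
  have h0 : (0:ℝ) ∈ Icc (0:ℝ) 1 := ⟨le_refl _, zero_le_one⟩
  have := h.dist_le_mul x hx 0 h0
  rw [dist_eq_norm] at this
  have hx1 : dist x 0 ≤ 1 := by
    rw [Real.dist_eq, sub_zero, _root_.abs_of_nonneg hx.1]; exact hx.2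
  have : ‖f x - f 0‖ ≤ K := le_trans this (by nlinarith [K.coe_nonneg])
  calc ‖f x‖ = ‖f x - f 0 + f 0‖ := by rw [sub_add_cancel]
    _ ≤ ‖f x - f 0‖ + ‖f 0‖ := norm_add_le _ _
    _ ≤ (K : ℝ) + ‖f 0‖ := by linarith
    _ = ‖f 0‖ + K := by ring

/-- product of Lipschitz real functions on Icc 0 1 is Lipschitz -/
lemma lip_mul {f g : ℝ → ℝ}
    (hf : ∃ K, LipschitzOnWith K f (Icc 0 1)) (hg : ∃ K, LipschitzOnWith K g (Icc 0 1)) :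
    ∃ K, LipschitzOnWith K (fun x => f x * g x) (Icc 0 1) := by
  obtain ⟨Kf, hf⟩ := hf
  obtain ⟨Kg, hg⟩ := hg
  set Mf : ℝ := ‖f 0‖ + Kf with hMf
  set Mg : ℝ := ‖g 0‖ + Kg with hMg
  have hMf0 : 0 ≤ Mf := by positivity
  have hMg0 : 0 ≤ Mg := by positivity
  refine ⟨(Mf * Kg + Mg * Kf).toNNReal, LipschitzOnWith.of_dist_le_mul fun x hx y hy => ?_⟩
  have hbf := lip_bound hf x hx
  have hbg := lip_bound hg y hy
  rw [Real.norm_eq_abs] at hbf hbg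
  have d1 := hf.dist_le_mul x hx y hy
  have d2 := hg.dist_le_mul x hx y hy
  rw [Real.dist_eq] at d1 d2 ⊢
  rw [Real.dist_eq] at d1 d2 ⊢
  have : |f x * g x - f y * g y| ≤ |f x| * |g x - g y| + |g y| * |f x - f y| := by
    calc |f x * g x - f y * g y| = |f x * (g x - g y) + g y * (f x - f y)| := by ring_nf
      _ ≤ |f x * (g x - g y)| + |g y * (f x - f y)| := abs_add_le _ _
      _ = |f x| * |g x - g y| + |g y| * |f x - f y| := by rw [abs_mul, abs_mul]
  have hco : ((Mf * Kg + Mg * Kf).toNNReal : ℝ) = Mf * Kg + Mg * Kf := by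
    rw [Real.coe_toNNReal]
    positivity
  rw [hco]
  have t1 : |f x| * |g x - g y| ≤ Mf * (Kg * |x - y|) := by
    apply mul_le_mul hbf d2 (abs_nonneg _) hMf0
  have t2 : |g y| * |f x - f y| ≤ Mg * (Kf * |x - y|) := by
    apply mul_le_mul hbg d1 (abs_nonneg _) hMg0
  nlinarith [abs_nonneg (x - y)]

lemma lip_inv {f : ℝ → ℝ} {δ : ℝ} (hδ : 0 < δ)
    (hf : ∃ K, LipschitzOnWith K f (Icc 0 1)) (hl : ∀ x ∈ Icc (0:ℝ) 1, δ ≤ f x) :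
    ∃ K, LipschitzOnWith K (fun x => (f x)⁻¹) (Icc 0 1) := by
  obtain ⟨Kf, hf⟩ := hf
  refine ⟨(Kf / (δ * δ)).toNNReal, LipschitzOnWith.of_dist_le_mul fun x hx y hy => ?_⟩
  have hfx := hl x hx
  have hfy := hl y hy
  have hfx0 : f x ≠ 0 := by linarith
  have hfy0 : f y ≠ 0 := by linarith
  have d1 := hf.dist_le_mul x hx y hy
  rw [Real.dist_eq] at d1
  rw [Real.dist_eq, Real.dist_eq]
  have he : (f x)⁻¹ - (f y)⁻¹ = (f y - f x) / (f x * f y) := by field_simp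
  rw [he, abs_div, abs_mul]
  have hco : ((Kf / (δ * δ)).toNNReal : ℝ) = Kf / (δ * δ) := by
    rw [Real.coe_toNNReal]; positivity
  rw [hco]
  rw [div_le_iff₀ (by positivity : (0:ℝ) < |f x| * |f y|)]
  have h1 : |f y - f x| ≤ Kf * |x - y| := by rw [abs_sub_comm]; exact d1
  have h2 : δ * δ ≤ |f x| * |f y| :=
    mul_le_mul (le_trans hfx (le_abs_self _)) (le_trans hfy (le_abs_self _)) hδ.le (abs_nonneg _)
  have h3 : (0:ℝ) ≤ Kf * |x - y| := by positivity
  calc |f y - f x| ≤ Kf * |x - y| := h1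
    _ = Kf / (δ * δ) * |x - y| * (δ * δ) := by field_simp
    _ ≤ Kf / (δ * δ) * |x - y| * (|f x| * |f y|) := by
        apply mul_le_mul_of_nonneg_left h2 (by positivity)

lemma lip_exp {f : ℝ → ℝ}
    (hf : ∃ K, LipschitzOnWith K f (Icc 0 1)) :
    ∃ K, LipschitzOnWith K (fun x => Real.exp (f x)) (Icc 0 1) := by
  obtain ⟨Kf, hf⟩ := hf
  set M : ℝ := ‖f 0‖ + Kf with hM
  have key : ∀ p q : ℝ, |p| ≤ M → |q| ≤ M → |Real.exp p - Real.exp q| ≤ Real.exp M * |p - q| := by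
    intro p q hp hq
    wlog hpq : q ≤ p generalizing p q
    · rw [abs_sub_comm, abs_sub_comm p q]; exact this q p hq hp (by linarith)
    have h1 : Real.exp q ≥ Real.exp p * (1 + (q - p)) := by
      have := Real.add_one_le_exp (q - p)
      calc Real.exp p * (1 + (q - p)) ≤ Real.exp p * Real.exp (q - p) := by
            apply mul_le_mul_of_nonneg_left (by linarith) (Real.exp_pos p).le
        _ = Real.exp q := by rw [← Real.exp_add]; ring_nf
    have h2 : Real.exp p - Real.exp q ≤ Real.exp p * (p - q) := by nlinarith
    have h3 : Real.exp p ≤ Real.exp M := Real.exp_le_exp.2 (le_trans (le_abs_self _) hp)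
    have h4 : (0:ℝ) ≤ Real.exp q := (Real.exp_pos q).le
    rw [_root_.abs_of_nonneg (by nlinarith [Real.exp_le_exp.2 hpq] : (0:ℝ) ≤ Real.exp p - Real.exp q),
      _root_.abs_of_nonneg (by linarith : (0:ℝ) ≤ p - q)]
    nlinarith [Real.exp_pos p]
  refine ⟨(Real.exp M * Kf).toNNReal, LipschitzOnWith.of_dist_le_mul fun x hx y hy => ?_⟩
  have hbx := lip_bound hf x hx
  have hby := lip_bound hf y hy
  rw [Real.norm_eq_abs] at hbx hby
  have d1 := hf.dist_le_mul x hx y hy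
  rw [Real.dist_eq] at d1 ⊢
  rw [Real.dist_eq]
  have hco : ((Real.exp M * Kf).toNNReal : ℝ) = Real.exp M * Kf := by
    rw [Real.coe_toNNReal]; positivity
  rw [hco]
  calc |Real.exp (f x) - Real.exp (f y)| ≤ Real.exp M * |f x - f y| := key _ _ hbx hby
    _ ≤ Real.exp M * (Kf * |x - y|) := by
        apply mul_le_mul_of_nonneg_left d1 (Real.exp_pos M).le
    _ = Real.exp M * Kf * |x - y| := by ring

/-- Lipschitz from a bounded derivative on Icc 0 1. -/
lemma lip_of_deriv {E : Type*} [NormedAddCommGroup E] [NormedSpace ℝ E]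
    {f f' : ℝ → E} {C : ℝ}
    (hf : ∀ x ∈ Icc (0:ℝ) 1, HasDerivWithinAt f (f' x) (Icc 0 1) x)
    (hC : ∀ x ∈ Icc (0:ℝ) 1, ‖f' x‖ ≤ C) :
    ∃ K, LipschitzOnWith K f (Icc 0 1) := by
  have hC0 : 0 ≤ C := le_trans (norm_nonneg _) (hC 0 ⟨le_refl _, zero_le_one⟩)
  refine ⟨C.toNNReal, LipschitzOnWith.of_dist_le_mul fun x hx y hy => ?_⟩
  rw [Real.coe_toNNReal _ hC0]
  wlog hxy : y ≤ x generalizing x y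
  · rw [dist_comm, Real.dist_eq, abs_sub_comm, ← Real.dist_eq]
    exact this y hy x hx (by linarith)
  have hsub : Icc y x ⊆ Icc (0:ℝ) 1 := Icc_subset_Icc hy.1 hx.2
  have := norm_image_sub_le_of_norm_deriv_le_segment'
    (f' := f') (fun z hz => (hf z (hsub hz)).mono hsub)
    (fun z hz => hC z (hsub (Ico_subset_Icc_self hz))) x (⟨hxy, le_refl _⟩)
  rw [dist_eq_norm, Real.dist_eq, _root_.abs_of_nonneg (by linarith : (0:ℝ) ≤ x - y)]
  exact this


section realsol

variable {q u u' : ℝ → ℝ}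
variable (hu : ∀ x ∈ Icc (0:ℝ) 1, HasDerivWithinAt u (u' x) (Icc 0 1) x)
variable (hu'lip : ∃ L, LipschitzOnWith L u' (Icc 0 1))
variable (hode : ∀ᵐ x ∂(volume.restrict (Ioo (0:ℝ) 1)), HasDerivAt u' (q x * u x) x)

/-- u is Lipschitz on Icc 0 1 -/
lemma u_lip (hu : ∀ x ∈ Icc (0:ℝ) 1, HasDerivWithinAt u (u' x) (Icc 0 1) x)
    (hu'lip : ∃ L, LipschitzOnWith L u' (Icc 0 1)) :
    ∃ K, LipschitzOnWith K u (Icc 0 1) := by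
  obtain ⟨L, hL⟩ := hu'lip
  exact lip_of_deriv hu (lip_bound hL)

/-- interior a.e. derivative of u -/
lemma u_ae_deriv (hu : ∀ x ∈ Icc (0:ℝ) 1, HasDerivWithinAt u (u' x) (Icc 0 1) x) :
    ∀ᵐ x ∂(volume.restrict (Ioo (0:ℝ) 1)), HasDerivAt u (u' x) x := by
  filter_upwards [ae_restrict_mem (measurableSet_Ioo (a := (0:ℝ)) (b := 1))] with x hx
  exact (hu x (Ioo_subset_Icc_self hx)).hasDerivAt (Icc_mem_nhds hx.1 hx.2)

/-- If `u(0) > 0`, `u'(0) = 0`, `q ≥ 0` a.e., then `u ≥ u 0 > 0` and `u' ≥ 0` on `[0,1]`. -/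
lemma sol_pos (hq : ∀ᵐ x ∂(volume.restrict (Ioo (0:ℝ) 1)), 0 ≤ q x)
    (hu : ∀ x ∈ Icc (0:ℝ) 1, HasDerivWithinAt u (u' x) (Icc 0 1) x)
    (hu'lip : ∃ L, LipschitzOnWith L u' (Icc 0 1))
    (hode : ∀ᵐ x ∂(volume.restrict (Ioo (0:ℝ) 1)), HasDerivAt u' (q x * u x) x)
    (hu'0 : u' 0 = 0) (hu0 : 0 < u 0) :
    (∀ x ∈ Icc (0:ℝ) 1, u 0 ≤ u x) ∧ (∀ x ∈ Icc (0:ℝ) 1, 0 ≤ u' x) := by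
  obtain ⟨L, hL⟩ := hu'lip
  obtain ⟨K, hK⟩ := u_lip hu ⟨L, hL⟩
  have huae := u_ae_deriv hu
  -- step: if u ≥ 0 on [0,z] then u' ≥ 0 on [0,z] and u 0 ≤ u z
  have step : ∀ z ∈ Icc (0:ℝ) 1, (∀ x ∈ Ico 0 z, 0 ≤ u x) →
      (∀ x ∈ Icc 0 z, 0 ≤ u' x) ∧ u 0 ≤ u z := by
    intro z hz hnn
    have h0 : (0:ℝ) ∈ Icc (0:ℝ) 1 := ⟨le_refl _, zero_le_one⟩
    have hu' : ∀ x ∈ Icc 0 z, 0 ≤ u' x := by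
      intro x hx
      have hxI : x ∈ Icc (0:ℝ) 1 := ⟨hx.1, le_trans hx.2 hz.2⟩
      have := ftc_on hL hode h0 hxI hx.1
      rw [hu'0, sub_zero] at this
      rw [this]
      apply MeasureTheory.integral_nonneg_of_ae
      have hsub : Ioo (0:ℝ) x ⊆ Ioo (0:ℝ) 1 := Ioo_subset_Ioo le_rfl hxI.2
      filter_upwards [ae_mono (Measure.restrict_mono hsub le_rfl) hq,
        ae_restrict_mem (measurableSet_Ioo (a := (0:ℝ)) (b := x))] with s hs hs2
      have : 0 ≤ u s := hnn s ⟨hs2.1.le, lt_of_lt_of_le hs2.2 hx.2⟩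
      positivity
    refine ⟨hu', ?_⟩
    have := ftc_on hK huae h0 hz hz.1
    have hnn2 : 0 ≤ ∫ x in Ioo (0:ℝ) z, u' x := by
      apply MeasureTheory.integral_nonneg_of_ae
      filter_upwards [ae_restrict_mem (measurableSet_Ioo (a := (0:ℝ)) (b := z))] with s hs
      exact hu' s ⟨hs.1.le, hs.2.le⟩
    linarith
  -- positivity on all of [0,1]
  have hpos : ∀ x ∈ Icc (0:ℝ) 1, 0 < u x := by
    by_contra hcon
    push_neg at hcon
    obtain ⟨x0', hx0', hx0le⟩ := hcon
    set S : Set ℝ := Icc 0 1 ∩ u ⁻¹' (Iic 0) with hS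
    have hucont : ContinuousOn u (Icc 0 1) := fun x hx => (hu x hx).continuousWithinAt
    have hSclosed : IsClosed S := hucont.preimage_isClosed_of_isClosed isClosed_Icc isClosed_Iic
    have hSne : S.Nonempty := ⟨x0', hx0', hx0le⟩
    have hSbdd : BddBelow S := ⟨0, fun x hx => hx.1.1⟩
    set z := sInf S with hzdef
    have hzS : z ∈ S := hSclosed.csInf_mem hSne hSbdd
    have hz1 : z ∈ Icc (0:ℝ) 1 := hzS.1
    have hz0 : u z ≤ 0 := hzS.2
    have hzpos : 0 < z := by
      rcases lt_or_eq_of_le hz1.1 with h | h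
      · exact h
      · exfalso; rw [← h] at hz0; linarith
    have hlt : ∀ x ∈ Ico (0:ℝ) z, 0 ≤ u x := by
      intro x hx
      by_contra hneg
      push_neg at hneg
      have : x ∈ S := ⟨⟨hx.1, by linarith [hz1.2, hx.2]⟩, le_of_lt hneg⟩
      have := csInf_le hSbdd this
      linarith [hx.2]
    have := (step z hz1 hlt).2
    linarith
  have h2 : ∀ x ∈ Icc (0:ℝ) 1, (∀ s ∈ Ico 0 x, 0 ≤ u s) := by
    intro x hx s hs
    exact (hpos s ⟨hs.1, le_trans hs.2.le hx.2⟩).le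
  constructor
  · intro x hx
    exact (step x hx (h2 x hx)).2
  · intro x hx
    have h1 : (1:ℝ) ∈ Icc (0:ℝ) 1 := ⟨zero_le_one, le_refl _⟩
    exact (step 1 h1 (h2 1 h1)).1 x hx

/-- If `u(0) = 0`, `u'(0) = 0`, `|q| ≤ M` a.e., then `u ≡ 0` on `[0,1]`. -/
lemma sol_vanish {M : ℝ} (hM : 0 ≤ M)
    (hq : ∀ᵐ x ∂(volume.restrict (Ioo (0:ℝ) 1)), |q x| ≤ M)
    (hu : ∀ x ∈ Icc (0:ℝ) 1, HasDerivWithinAt u (u' x) (Icc 0 1) x)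
    (hu'lip : ∃ L, LipschitzOnWith L u' (Icc 0 1))
    (hode : ∀ᵐ x ∂(volume.restrict (Ioo (0:ℝ) 1)), HasDerivAt u' (q x * u x) x)
    (hu'0 : u' 0 = 0) (hu0 : u 0 = 0) :
    ∀ x ∈ Icc (0:ℝ) 1, u x = 0 := by
  obtain ⟨L, hL⟩ := hu'lip
  have hulip : ∃ K, LipschitzOnWith K u (Icc 0 1) := u_lip hu ⟨L, hL⟩
  have huae := u_ae_deriv hu
  set ex : ℝ → ℝ := fun x => Real.exp (-(1 + M) * x) with hex
  set G : ℝ → ℝ := fun x => (u x * u x + u' x * u' x) * ex x with hG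
  have hexd : ∀ x : ℝ, HasDerivAt ex (-(1 + M) * ex x) x := by
    intro x
    have : HasDerivAt (fun x : ℝ => -(1 + M) * x) (-(1 + M)) x := by
      simpa using (hasDerivAt_id x).const_mul (-(1 + M))
    simpa [hex, mul_comm] using this.exp
  have hexlip : ∃ K, LipschitzOnWith K ex (Icc 0 1) := by
    apply lip_of_deriv (f' := fun x => -(1 + M) * ex x)
      (fun x _ => (hexd x).hasDerivWithinAt)
    intro x hx
    rw [Real.norm_eq_abs, abs_mul, hex]
    have h1 : |(-(1 + M))| ≤ 1 + M := by rw [abs_neg, _root_.abs_of_nonneg (by linarith)]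
    have h2 : |Real.exp (-(1 + M) * x)| ≤ 1 := by
      rw [_root_.abs_of_pos (Real.exp_pos _)]
      have h0 : -(1 + M) * x ≤ 0 := by
        have : 0 ≤ (1 + M) * x := mul_nonneg (by linarith) hx.1
        linarith
      calc Real.exp (-(1 + M) * x) ≤ Real.exp 0 := Real.exp_le_exp.2 h0
        _ = 1 := Real.exp_zero
    calc |(-(1 + M))| * |Real.exp (-(1 + M) * x)| ≤ (1 + M) * 1 :=
          mul_le_mul h1 h2 (abs_nonneg _) (by linarith)
      _ = 1 + M := mul_one _
  have hGlip : ∃ K, LipschitzOnWith K G (Icc 0 1) := by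
    have h1 : ∃ K, LipschitzOnWith K (fun x => u x * u x + u' x * u' x) (Icc 0 1) := by
      obtain ⟨K1, h1⟩ := lip_mul hulip hulip
      obtain ⟨K2, h2⟩ := lip_mul ⟨L, hL⟩ ⟨L, hL⟩
      exact ⟨K1 + K2, h1.add h2⟩
    exact lip_mul h1 hexlip
  have hGd : ∀ᵐ x ∂(volume.restrict (Ioo (0:ℝ) 1)),
      HasDerivAt G ((u' x * u x + u x * u' x + ((q x * u x) * u' x + u' x * (q x * u x))) * ex x
        + (u x * u x + u' x * u' x) * (-(1 + M) * ex x)) x := by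
    filter_upwards [huae, hode] with x h1 h2
    exact ((h1.mul h1).add (h2.mul h2)).mul (hexd x)
  have hGle : ∀ᵐ x ∂(volume.restrict (Ioo (0:ℝ) 1)),
      (u' x * u x + u x * u' x + ((q x * u x) * u' x + u' x * (q x * u x))) * ex x
        + (u x * u x + u' x * u' x) * (-(1 + M) * ex x) ≤ 0 := by
    filter_upwards [hq] with x hqx
    have hexpos : 0 < ex x := Real.exp_pos _
    have key : u' x * u x + u x * u' x + ((q x * u x) * u' x + u' x * (q x * u x))
        ≤ (1 + M) * (u x * u x + u' x * u' x) := by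
      have habs : q x * (u x * u' x) ≤ M * |u x * u' x| := by
        calc q x * (u x * u' x) ≤ |q x * (u x * u' x)| := le_abs_self _
          _ = |q x| * |u x * u' x| := abs_mul _ _
          _ ≤ M * |u x * u' x| := mul_le_mul_of_nonneg_right hqx (abs_nonneg _)
      have habs2 : 2 * |u x * u' x| ≤ u x * u x + u' x * u' x := by
        rcases abs_cases (u x * u' x) with ⟨h, _⟩ | ⟨h, _⟩ <;> rw [h] <;> nlinarith [sq_nonneg (u x - u' x), sq_nonneg (u x + u' x)]
      have h2uu : 2 * (u x * u' x) ≤ u x * u x + u' x * u' x := by nlinarith [sq_nonneg (u x - u' x)]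
      nlinarith [abs_nonneg (u x * u' x)]
    nlinarith [hexpos]
  have hanti : ∀ x ∈ Icc (0:ℝ) 1, G x ≤ G 0 := by
    obtain ⟨KG, hKG⟩ := hGlip
    intro x hx
    exact antitone_of_deriv_nonpos_ae hKG hGd hGle ⟨le_refl _, zero_le_one⟩ hx hx.1
  intro x hx
  have hG0 : G 0 = 0 := by simp [hG, hu0, hu'0]
  have := hanti x hx
  rw [hG0] at this
  have hexpos : 0 < ex x := Real.exp_pos _
  have hA : u x * u x + u' x * u' x ≤ 0 := by
    have h0 : (u x * u x + u' x * u' x) * ex x ≤ 0 * ex x := by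
      rw [zero_mul]; exact this
    exact le_of_mul_le_mul_right h0 hexpos
  nlinarith [mul_self_nonneg (u x), mul_self_nonneg (u' x)]


lemma abs_sinh_le_cosh (p : ℝ) : |Real.sinh p| ≤ Real.cosh p := by
  rw [Real.sinh_eq, Real.cosh_eq]
  rcases abs_cases ((Real.exp p - Real.exp (-p)) / 2) with ⟨h, _⟩ | ⟨h, _⟩ <;> rw [h] <;>
    [skip; skip] <;> nlinarith [Real.exp_pos p, Real.exp_pos (-p)]

/-- The projection `z ↦ (c*z).re` as a continuous ℝ-linear map. -/
def Tc (c : ℂ) : ℂ →L[ℝ] ℝ := Complex.reCLM.comp (c • ContinuousLinearMap.id ℝ ℂ)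

lemma Tc_apply (c z : ℂ) : Tc c z = (c * z).re := by
  simp [Tc, smul_eq_mul]

set_option maxHeartbeats 2000000 in
/-- Key inequality lemma. -/
lemma key {b1 b2 t : ℝ} (hb1 : 0 ≤ b1) (hb2 : 0 < b2) (B : ℝ → ℝ)
    (hB : ∀ᵐ x ∂mu01, b1 ≤ B x ∧ B x ≤ b2)
    (hqe : QuasiEigen (fun x => ((B x : ℝ) : ℂ)) ((t : ℂ) * Complex.I)) :
    0 < t ∧ t * Real.cosh (t * Real.sqrt b2) ≤ (t * Real.sqrt b2) * Real.sinh (t * Real.sqrt b2)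
      ∧ (t * Real.cosh (t * Real.sqrt b2) = (t * Real.sqrt b2) * Real.sinh (t * Real.sqrt b2)
          → ∀ᵐ x ∂mu01, B x = b2) := by
  obtain ⟨hκ, y, y', ⟨hy, hy'lip, hode⟩, hyne, hy'0, hbc⟩ := hqe
  have ht0 : t ≠ 0 := by
    intro h
    exact hκ (by simp [h])
  have hBnn : ∀ᵐ x ∂mu01, 0 ≤ B x := hB.mono fun x hx => le_trans hb1 hx.1
  -- rewrite the ODE with real coefficient t^2 * B x
  have hode' : ∀ᵐ x ∂mu01, HasDerivAt y' (((t^2 * B x : ℝ) : ℂ) * y x) x := by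
    refine hode.mono fun x hx => ?_
    convert hx using 1
    push_cast
    rw [mul_pow, Complex.I_sq]
    ring
  -- real projections
  have hTd : ∀ (c : ℂ), ∀ x ∈ Icc (0:ℝ) 1,
      HasDerivWithinAt (fun s => (c * y s).re) ((c * y' x).re) (Icc 0 1) x := by
    intro c x hx
    have := (Tc c).hasFDerivAt.comp_hasDerivWithinAt x (hy x hx)
    simpa [Function.comp_def, Tc_apply] using this
  have hTlip : ∀ (c : ℂ), ∃ K, LipschitzOnWith K (fun s => (c * y' s).re) (Icc 0 1) := by
    intro c
    obtain ⟨L, hL⟩ := hy'lip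
    exact ⟨‖Tc c‖₊ * L, by simpa [Function.comp_def, Tc_apply]
      using ((Tc c).lipschitz.comp_lipschitzOnWith hL)⟩
  have hTode : ∀ (c : ℂ), ∀ᵐ x ∂mu01,
      HasDerivAt (fun s => (c * y' s).re) ((t^2 * B x) * (c * y x).re) x := by
    intro c
    refine hode'.mono fun x hx => ?_
    have := (Tc c).hasFDerivAt.comp_hasDerivAt x hx
    have he : Tc c (((t^2 * B x : ℝ) : ℂ) * y x) = (t^2 * B x) * (c * y x).re := by
      rw [Tc_apply]
      have : c * (((t^2 * B x : ℝ) : ℂ) * y x) = ((t^2 * B x : ℝ) : ℂ) * (c * y x) := by ring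
      rw [this, Complex.re_ofReal_mul]
    rw [← he]
    simpa [Function.comp_def, Tc_apply] using this
  have hT0 : ∀ (c : ℂ), (fun s => (c * y' s).re) 0 = 0 := by
    intro c; simp [hy'0]
  -- y 0 ≠ 0
  have hy00 : y 0 ≠ 0 := by
    intro h0
    have hvan : ∀ (c : ℂ), ∀ x ∈ Icc (0:ℝ) 1, (c * y x).re = 0 := by
      intro c
      refine sol_vanish (q := fun x => t^2 * B x) (M := t^2 * b2) (by positivity)
        ?_ (hTd c) (hTlip c) (hTode c) (hT0 c) (by simp [h0])
      refine hB.mono fun x hx => ?_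
      rw [abs_mul, _root_.abs_of_nonneg (sq_nonneg t), _root_.abs_of_nonneg (le_trans hb1 hx.1)]
      exact mul_le_mul_of_nonneg_left hx.2 (sq_nonneg t)
    obtain ⟨x0, hx0, hyx0⟩ := hyne
    apply hyx0
    have h1 := hvan 1 x0 hx0
    have h2 := hvan (-Complex.I) x0 hx0
    rw [one_mul] at h1
    apply Complex.ext h1
    simpa using h2
  -- normalized real solution
  set c : ℂ := starRingEnd ℂ (y 0) with hc
  set u : ℝ → ℝ := fun s => (c * y s).re with hudef
  set u' : ℝ → ℝ := fun s => (c * y' s).re with hu'def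
  have hu0pos : 0 < u 0 := by
    have : u 0 = Complex.normSq (y 0) := by
      rw [hudef]
      simp [hc, mul_comm, Complex.mul_conj]
    rw [this]
    exact Complex.normSq_pos.2 hy00
  have hu'0 : u' 0 = 0 := hT0 c
  -- boundary condition
  have hbc' : y' 1 = (t : ℂ) * y 1 := by
    have h1 : Complex.I * ((t:ℂ) * y 1) = Complex.I * y' 1 := by
      rw [← hbc]; ring
    exact (mul_left_cancel₀ Complex.I_ne_zero h1).symm
  have hu'1 : u' 1 = t * u 1 := by
    have h2 : (c * y' 1).re = t * (c * y 1).re := by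
      rw [hbc']
      have h3 : c * ((t:ℂ) * y 1) = ((t:ℝ):ℂ) * (c * y 1) := by ring
      rw [h3, Complex.re_ofReal_mul]
    simpa [hu'def, hudef] using h2
  -- sol_pos
  have hqnn : ∀ᵐ x ∂(volume.restrict (Ioo (0:ℝ) 1)), 0 ≤ t^2 * B x :=
    hBnn.mono fun x hx => by positivity
  obtain ⟨hge, hu'nn⟩ := sol_pos hqnn (hTd c) (hTlip c) (hTode c) hu'0 hu0pos
  have h1I : (1:ℝ) ∈ Icc (0:ℝ) 1 := ⟨zero_le_one, le_refl _⟩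
  have h0I : (0:ℝ) ∈ Icc (0:ℝ) 1 := ⟨le_refl _, zero_le_one⟩
  have hu1pos : 0 < u 1 := lt_of_lt_of_le hu0pos (hge 1 h1I)
  have htpos : 0 < t := by
    rcases lt_trichotomy t 0 with h | h | h
    · exfalso
      have h5 : 0 ≤ t * u 1 := by rw [← hu'1]; exact hu'nn 1 h1I
      nlinarith
    · exact absurd h ht0
    · exact h
  refine ⟨htpos, ?_⟩
  -- setup comparison
  set s : ℝ := Real.sqrt b2 with hsdef
  have hs : 0 < s := Real.sqrt_pos.2 hb2
  set cc : ℝ := t * s with hccdef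
  have hccpos : 0 < cc := mul_pos htpos hs
  have hcc2 : cc^2 = t^2 * b2 := by
    rw [hccdef, mul_pow, hsdef, Real.sq_sqrt hb2.le]
  set w : ℝ → ℝ := fun x => cc * Real.sinh (cc * x) * (Real.cosh (cc * x))⁻¹ with hwdef
  have hcoshpos : ∀ p : ℝ, 0 < Real.cosh p := Real.cosh_pos
  have hwd : ∀ x : ℝ, HasDerivAt w (cc^2 - w x^2) x := by
    intro x
    have hlin : HasDerivAt (fun x : ℝ => cc * x) cc x := by
      simpa using (hasDerivAt_id x).const_mul cc
    have hsinh : HasDerivAt (fun x : ℝ => Real.sinh (cc * x)) (Real.cosh (cc * x) * cc) x :=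
      (Real.hasDerivAt_sinh (cc * x)).comp x hlin
    have hcosh : HasDerivAt (fun x : ℝ => Real.cosh (cc * x)) (Real.sinh (cc * x) * cc) x :=
      (Real.hasDerivAt_cosh (cc * x)).comp x hlin
    have hinv : HasDerivAt (fun x : ℝ => (Real.cosh (cc * x))⁻¹)
        (-(Real.sinh (cc * x) * cc) / (Real.cosh (cc * x))^2) x :=
      hcosh.inv (ne_of_gt (hcoshpos _))
    have hprod := ((hsinh.const_mul cc).mul hinv)
    refine hprod.congr_deriv (Eq.symm ?_)
    rw [hwdef]
    have hch := hcoshpos (cc * x)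
    have hid := Real.cosh_sq_sub_sinh_sq (cc * x)
    field_simp
    nlinarith [hid]
  have hwbound : ∀ x ∈ Icc (0:ℝ) 1, |w x| ≤ cc := by
    intro x hx
    have h1 := abs_sinh_le_cosh (cc * x)
    have hch := hcoshpos (cc * x)
    have h2 : |w x| = cc * (|Real.sinh (cc*x)| * (Real.cosh (cc*x))⁻¹) := by
      rw [hwdef]
      simp only
      rw [abs_mul, abs_mul, _root_.abs_of_pos hccpos, _root_.abs_of_pos (inv_pos.2 hch),
        mul_assoc]
    rw [h2]
    have h3 : |Real.sinh (cc*x)| * (Real.cosh (cc*x))⁻¹ ≤ 1 := by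
      rw [← mul_inv_cancel₀ (ne_of_gt hch)]
      exact mul_le_mul_of_nonneg_right h1 (inv_pos.2 hch).le
    nlinarith [hccpos]
  have hw0 : w 0 = 0 := by simp [hwdef]
  have hwlip : ∃ K, LipschitzOnWith K w (Icc 0 1) := by
    apply lip_of_deriv (f' := fun x => cc^2 - w x^2) (C := cc^2 + cc^2)
      (fun x _ => (hwd x).hasDerivWithinAt)
    intro x hx
    have hwb := hwbound x hx
    rw [Real.norm_eq_abs]
    have hsq : w x ^ 2 ≤ cc ^ 2 := by
      have h4 := mul_self_le_mul_self (abs_nonneg (w x)) hwb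
      nlinarith [_root_.sq_abs (w x)]
    rcases abs_cases (cc^2 - w x^2) with ⟨h, _⟩ | ⟨h, _⟩ <;> rw [h] <;>
      nlinarith [sq_nonneg (w x)]
  -- v
  set v : ℝ → ℝ := fun x => u' x * (u x)⁻¹ with hvdef
  have hulip : ∃ K, LipschitzOnWith K u (Icc 0 1) := u_lip (hTd c) (hTlip c)
  have hvlip : ∃ K, LipschitzOnWith K v (Icc 0 1) :=
    lip_mul (hTlip c) (lip_inv hu0pos hulip hge)
  have hv1 : v 1 = t := by
    rw [hvdef]
    simp only
    rw [hu'1, mul_assoc, mul_inv_cancel₀ (ne_of_gt hu1pos), mul_one]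
  have hv0 : v 0 = 0 := by rw [hvdef]; simp [hu'0]
  -- w at 1
  have hw1 : w 1 = cc * Real.sinh cc * (Real.cosh cc)⁻¹ := by rw [hwdef]; simp
  -- vw sum lipschitz and bound
  have hvwlip : ∃ K, LipschitzOnWith K (fun x => v x + w x) (Icc 0 1) := by
    obtain ⟨K1, h1⟩ := hvlip
    obtain ⟨K2, h2⟩ := hwlip
    exact ⟨K1 + K2, h1.add h2⟩
  obtain ⟨Kvw, hKvw⟩ := hvwlip
  set Cvw : ℝ := ‖v 0 + w 0‖ + Kvw with hCvw
  have hvwbd : ∀ x ∈ Icc (0:ℝ) 1, ‖v x + w x‖ ≤ Cvw := lip_bound hKvw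
  have hCvw0 : 0 ≤ Cvw := le_trans (norm_nonneg _) (hvwbd 0 h0I)
  have hvwcont : ContinuousOn (fun x => v x + w x) (Icc 0 1) := hKvw.continuousOn
  have hvwint : ∀ p ∈ Icc (0:ℝ) 1, ∀ r ∈ Icc (0:ℝ) 1,
      IntervalIntegrable (fun x => v x + w x) volume p r := by
    intro p hp r hr
    apply ContinuousOn.intervalIntegrable
    apply hvwcont.mono
    apply uIcc_subset_Icc hp hr
  set F : ℝ → ℝ := fun x => ∫ z in (0:ℝ)..x, (v z + w z) with hFdef
  have hFlip : LipschitzOnWith Cvw.toNNReal F (Icc 0 1) := by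
    apply LipschitzOnWith.of_dist_le_mul
    intro p hp r hr
    have hchasles : F p - F r = ∫ z in r..p, (v z + w z) := by
      rw [hFdef]
      have := intervalIntegral.integral_add_adjacent_intervals
        (hvwint 0 h0I r hr) (hvwint r hr p hp)
      simp only
      linarith
    rw [Real.dist_eq, Real.dist_eq, hchasles]
    have := intervalIntegral.norm_integral_le_of_norm_le_const
      (f := fun x => v x + w x) (a := r) (b := p) (C := Cvw) ?_
    · rw [Real.coe_toNNReal _ hCvw0]
      rw [Real.norm_eq_abs] at this
      exact this
    · intro z hz
      have : z ∈ Icc (0:ℝ) 1 := by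
        rcases le_total r p with h | h
        · rw [Set.uIoc_of_le h] at hz
          exact ⟨le_trans hr.1 hz.1.le, le_trans hz.2 hp.2⟩
        · rw [Set.uIoc_of_ge h] at hz
          exact ⟨le_trans hp.1 hz.1.le, le_trans hz.2 hr.2⟩
      exact hvwbd z this
  have hF0 : F 0 = 0 := by rw [hFdef]; simp
  have hFd : ∀ x ∈ Ioo (0:ℝ) 1, HasDerivAt F (v x + w x) x := by
    intro x hx
    apply intervalIntegral.integral_hasDerivAt_right (hvwint 0 h0I x (Ioo_subset_Icc_self hx))
    · exact ⟨Ioo 0 1, Ioo_mem_nhds hx.1 hx.2,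
        (hvwcont.mono Ioo_subset_Icc_self).aestronglyMeasurable measurableSet_Ioo⟩
    · exact (hvwcont x (Ioo_subset_Icc_self hx)).continuousAt (Icc_mem_nhds hx.1 hx.2)
  -- g
  set g : ℝ → ℝ := fun x => (v x - w x) * Real.exp (F x) with hgdef
  set gd : ℝ → ℝ := fun x => Real.exp (F x) * (t^2 * (B x - b2)) with hgddef
  have hglip : ∃ K, LipschitzOnWith K g (Icc 0 1) := by
    apply lip_mul _ (lip_exp ⟨_, hFlip⟩)
    obtain ⟨K1, h1⟩ := hvlip
    obtain ⟨K2, h2⟩ := hwlip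
    exact ⟨K1 + K2, h1.sub h2⟩
  have huae := u_ae_deriv (hTd c)
  have hgd : ∀ᵐ x ∂mu01, HasDerivAt g (gd x) x := by
    have hmem : ∀ᵐ x ∂mu01, x ∈ Ioo (0:ℝ) 1 := ae_restrict_mem measurableSet_Ioo
    filter_upwards [hmem, hTode c, huae] with x hx hode_x hu_x
    have hux : u 0 ≤ u x := hge x (Ioo_subset_Icc_self hx)
    have hux0 : u x ≠ 0 := ne_of_gt (lt_of_lt_of_le hu0pos hux)
    have hv_x : HasDerivAt v ((t^2 * B x) * u x * (u x)⁻¹ + u' x * (-(u' x) / (u x)^2)) x :=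
      hode_x.mul (hu_x.inv hux0)
    have hF_x : HasDerivAt F (v x + w x) x := hFd x hx
    have hE_x : HasDerivAt (fun x => Real.exp (F x)) (Real.exp (F x) * (v x + w x)) x := hF_x.exp
    have hg_x := (hv_x.sub (hwd x)).mul hE_x
    refine hg_x.congr_deriv (Eq.symm ?_)
    rw [hgddef, hvdef]
    simp only [Pi.sub_apply]
    rw [hcc2]
    field_simp
    ring
  have hgle : ∀ᵐ x ∂mu01, gd x ≤ 0 := by
    filter_upwards [hB] with x hx
    rw [hgddef]
    have h1 : t^2 * (B x - b2) ≤ 0 :=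
      mul_nonpos_iff.2 (Or.inl ⟨sq_nonneg t, by linarith [hx.2]⟩)
    have h2 : 0 < Real.exp (F x) := Real.exp_pos _
    exact mul_nonpos_of_nonneg_of_nonpos h2.le h1
  obtain ⟨Kg, hKg⟩ := hglip
  have hanti : ∀ p ∈ Icc (0:ℝ) 1, ∀ r ∈ Icc (0:ℝ) 1, p ≤ r → g r ≤ g p :=
    fun p hp r hr hpr => antitone_of_deriv_nonpos_ae hKg hgd hgle hp hr hpr
  have hg0 : g 0 = 0 := by rw [hgdef]; simp [hv0, hw0]
  have hg1le : g 1 ≤ 0 := by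
    have := hanti 0 h0I 1 h1I zero_le_one
    linarith [hg0 ▸ this]
  have hineq : t * Real.cosh cc ≤ cc * Real.sinh cc := by
    have hE1 : 0 < Real.exp (F 1) := Real.exp_pos _
    have h' : (v 1 - w 1) * Real.exp (F 1) ≤ 0 * Real.exp (F 1) := by
      rw [zero_mul]; exact hg1le
    have hvw1 : v 1 - w 1 ≤ 0 := le_of_mul_le_mul_right h' hE1
    rw [hv1, hw1] at hvw1
    have hch := hcoshpos cc
    have := mul_le_mul_of_nonneg_right (by linarith : t ≤ cc * Real.sinh cc * (Real.cosh cc)⁻¹)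
      hch.le
    calc t * Real.cosh cc ≤ cc * Real.sinh cc * (Real.cosh cc)⁻¹ * Real.cosh cc := this
      _ = cc * Real.sinh cc := by field_simp
  refine ⟨hineq, ?_⟩
  -- equality case
  intro heq
  have hw1t : w 1 = t := by
    rw [hw1]
    have hch := hcoshpos cc
    field_simp
    linarith [heq]
  have hg1 : g 1 = 0 := by
    rw [hgdef]
    simp only
    rw [hv1, hw1t]
    simp
  have hzero : ∀ x ∈ Icc (0:ℝ) 1, g x = 0 := by
    intro x hx
    have h1 := hanti 0 h0I x hx hx.1
    have h2 := hanti x hx 1 h1I hx.2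
    rw [hg0] at h1
    rw [hg1] at h2
    linarith
  have hmem : ∀ᵐ x ∂mu01, x ∈ Ioo (0:ℝ) 1 := ae_restrict_mem measurableSet_Ioo
  filter_upwards [hmem, hgd] with x hx hdx
  have hnb : Icc (0:ℝ) 1 ∈ 𝓝 x := Icc_mem_nhds hx.1 hx.2
  have h0 : HasDerivAt g 0 x := by
    apply (hasDerivAt_const x (0:ℝ)).congr_of_eventuallyEq
    filter_upwards [hnb] with z hz
    rw [hzero z hz]
  have huniq : gd x = 0 := hdx.unique h0
  rw [hgddef] at huniq
  simp only at huniq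
  rcases mul_eq_zero.1 huniq with h | h
  · exact absurd h (ne_of_gt (Real.exp_pos _))
  · rcases mul_eq_zero.1 h with h' | h'
    · exact absurd h' (by positivity)
    · linarith


set_option maxHeartbeats 2000000 in
/-- The optimal quasi-eigenvalue on the imaginary axis.
(i) If `b2 ≤ 1` then no `κ ∈ K(Ad)` has `Re κ = 0`.
(ii) If `b2 > 1` then `I(0) = (1/(2√b2))·log((√b2+1)/(√b2−1))` and the only `B ∈ Ad`
with `i·I(0) ∈ K(B)` is `B ≡ b2` (up to equality a.e.). -/
theorem statement7 (b1 b2 : ℝ) (hb1 : 0 ≤ b1) (hb12 : b1 ≤ b2) (hb2 : 0 < b2) :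
    (b2 ≤ 1 → ∀ κ ∈ KAd b1 b2, κ.re ≠ 0) ∧
    (1 < b2 →
      sInf {t : ℝ | (t : ℂ) * Complex.I ∈ KAd b1 b2} =
        (1 / (2 * Real.sqrt b2)) * Real.log ((Real.sqrt b2 + 1) / (Real.sqrt b2 - 1)) ∧
      ∀ B : ℝ → ℝ, InAd b1 b2 B →
        QuasiEigen (fun x => ((B x : ℝ) : ℂ))
          (((sInf {t : ℝ | (t : ℂ) * Complex.I ∈ KAd b1 b2} : ℝ) : ℂ) * Complex.I) →
        (∀ᵐ x ∂mu01, B x = b2)) := by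
  set s : ℝ := Real.sqrt b2 with hsdef
  have hs : 0 < s := Real.sqrt_pos.2 hb2
  have hs2 : s^2 = b2 := Real.sq_sqrt hb2.le
  constructor
  · -- part (i)
    intro hb21 κ hκ hre
    obtain ⟨B, hInAd, hq⟩ := hκ
    set t : ℝ := κ.im with htdef
    have hκt : κ = (t : ℂ) * Complex.I := by
      apply Complex.ext <;> simp [hre, htdef]
    rw [hκt] at hq
    obtain ⟨htpos, hineq, -⟩ := key hb1 hb2 B hInAd.2 hq
    set p : ℝ := t * s with hpdef
    have hppos : 0 < p := mul_pos htpos hs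
    have hple : p ≤ t := by
      have hs1 : s ≤ 1 := by
        calc s = Real.sqrt b2 := rfl
          _ ≤ Real.sqrt 1 := Real.sqrt_le_sqrt hb21
          _ = 1 := Real.sqrt_one
      nlinarith
    have hshp : 0 < Real.sinh p := Real.sinh_pos_iff.2 hppos
    have hsc : Real.sinh p < Real.cosh p := by
      rw [Real.sinh_eq, Real.cosh_eq]
      have := Real.exp_pos (-p)
      linarith
    nlinarith [hineq]
  · -- part (ii)
    intro hb21
    have hs1 : 1 < s := by
      have : Real.sqrt 1 < Real.sqrt b2 := Real.sqrt_lt_sqrt zero_le_one hb21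
      simpa using this
    set R : ℝ := (s + 1) / (s - 1) with hRdef
    have hR1 : 1 < R := by
      rw [hRdef, lt_div_iff₀ (by linarith)]
      linarith
    have hlogR : 0 < Real.log R := Real.log_pos hR1
    set tstar : ℝ := (1 / (2 * s)) * Real.log R with htstardef
    have htstarpos : 0 < tstar := by
      rw [htstardef]
      positivity
    set cstar : ℝ := s * tstar with hcstardef
    have hcstareq : cstar = Real.log R / 2 := by
      rw [hcstardef, htstardef]
      field_simp
    have hcstarpos : 0 < cstar := by rw [hcstareq]; positivity
    set E : ℝ := Real.exp cstar with hEdef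
    have hEpos : 0 < E := Real.exp_pos _
    have hE2 : E * E = R := by
      rw [hEdef, ← Real.exp_add]
      rw [show cstar + cstar = Real.log R by rw [hcstareq]; ring]
      exact Real.exp_log (by linarith : (0:ℝ) < R)
    have hsne : s - 1 ≠ 0 := by linarith
    have hE2' : E * E * (s - 1) = s + 1 := by
      rw [hE2, hRdef, div_mul_cancel₀ _ hsne]
    have hmain : Real.cosh cstar = s * Real.sinh cstar := by
      rw [Real.cosh_eq, Real.sinh_eq, Real.exp_neg, ← hEdef]
      field_simp
      nlinarith [hE2']
    have hcsq : cstar^2 = tstar^2 * b2 := by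
      rw [hcstardef]
      nlinarith [hs2]
    -- the membership: constant structure b2
    have hmem : ((tstar : ℂ) * Complex.I) ∈ KAd b1 b2 := by
      refine ⟨fun _ => b2, ⟨aestronglyMeasurable_const, ae_of_all _ fun x => ⟨hb12, le_refl _⟩⟩, ?_⟩
      refine ⟨?_, fun x => ((Real.cosh (cstar * x) : ℝ) : ℂ),
        fun x => ((cstar * Real.sinh (cstar * x) : ℝ) : ℂ), ⟨?_, ?_, ?_⟩, ?_, ?_, ?_⟩
      · simp [Complex.ext_iff, htstarpos.ne']
      · -- C¹
        intro x hx
        have hlin : HasDerivAt (fun x : ℝ => cstar * x) cstar x := by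
          simpa using (hasDerivAt_id x).const_mul cstar
        have h1 : HasDerivAt (fun x : ℝ => Real.cosh (cstar * x))
            (Real.sinh (cstar * x) * cstar) x := (Real.hasDerivAt_cosh _).comp x hlin
        have h2 := h1.ofReal_comp
        have : ((Real.sinh (cstar * x) * cstar : ℝ) : ℂ)
            = ((cstar * Real.sinh (cstar * x) : ℝ) : ℂ) := by
          push_cast; ring
        rw [this] at h2
        exact h2.hasDerivWithinAt
      · -- Lipschitz y'
        apply lip_of_deriv (f' := fun x => ((cstar^2 * Real.cosh (cstar * x) : ℝ) : ℂ))
          (C := cstar^2 * Real.cosh cstar)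
        · intro x hx
          have hlin : HasDerivAt (fun x : ℝ => cstar * x) cstar x := by
            simpa using (hasDerivAt_id x).const_mul cstar
          have h1 : HasDerivAt (fun x : ℝ => Real.sinh (cstar * x))
              (Real.cosh (cstar * x) * cstar) x := (Real.hasDerivAt_sinh _).comp x hlin
          have h2 := (h1.const_mul cstar).ofReal_comp
          have : ((cstar * (Real.cosh (cstar * x) * cstar) : ℝ) : ℂ)
              = ((cstar^2 * Real.cosh (cstar * x) : ℝ) : ℂ) := by
            push_cast; ring
          rw [this] at h2
          exact h2.hasDerivWithinAt
        · intro x hx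
          rw [Complex.norm_real, Real.norm_eq_abs, abs_mul,
            _root_.abs_of_nonneg (sq_nonneg cstar),
            _root_.abs_of_pos (Real.cosh_pos (x := cstar * x))]
          have : Real.cosh (cstar * x) ≤ Real.cosh cstar := by
            rw [Real.cosh_le_cosh, abs_mul, _root_.abs_of_pos hcstarpos,
              _root_.abs_of_nonneg hx.1]
            nlinarith [hx.2]
          nlinarith [sq_nonneg cstar]
      · -- ODE
        apply ae_of_all
        intro x
        have hlin : HasDerivAt (fun x : ℝ => cstar * x) cstar x := by
          simpa using (hasDerivAt_id x).const_mul cstar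
        have h1 : HasDerivAt (fun x : ℝ => Real.sinh (cstar * x))
            (Real.cosh (cstar * x) * cstar) x := (Real.hasDerivAt_sinh _).comp x hlin
        have h2 := (h1.const_mul cstar).ofReal_comp
        convert h2 using 1
        have hI : -(((tstar : ℂ) * Complex.I)^2) = ((tstar^2 : ℝ) : ℂ) := by
          rw [mul_pow, Complex.I_sq]
          push_cast
          ring
        have hc : ((cstar * (Real.cosh (cstar*x) * cstar) : ℝ) : ℂ)
            = ((cstar^2 * Real.cosh (cstar*x) : ℝ) : ℂ) := by
          push_cast; ring
        rw [hI, hc, hcsq]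
        push_cast
        ring
      · exact ⟨0, ⟨le_refl _, zero_le_one⟩, by norm_num⟩
      · norm_num
      · -- boundary
        have hb : tstar * Real.cosh cstar = cstar * Real.sinh cstar := by
          rw [hmain, hcstardef]; ring
        show (tstar:ℂ) * Complex.I * ((Real.cosh (cstar * 1) : ℝ) : ℂ)
            = Complex.I * ((cstar * Real.sinh (cstar * 1) : ℝ) : ℂ)
        rw [mul_one]
        rw [show ((cstar * Real.sinh cstar : ℝ) : ℂ)
            = ((tstar * Real.cosh cstar : ℝ) : ℂ) by rw [hb]]
        push_cast
        ring
    -- lower bound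
    have hlb : ∀ t ∈ {t : ℝ | (t : ℂ) * Complex.I ∈ KAd b1 b2}, tstar ≤ t := by
      intro t ht
      obtain ⟨B, hInAd, hq⟩ := ht
      obtain ⟨htpos, hineq, -⟩ := key hb1 hb2 B hInAd.2 hq
      set p : ℝ := t * s with hpdef
      have hppos : 0 < p := mul_pos htpos hs
      have h1 : Real.cosh p ≤ s * Real.sinh p := by
        have h2 : t * Real.cosh p ≤ t * (s * Real.sinh p) := by
          calc t * Real.cosh p ≤ p * Real.sinh p := hineq
            _ = t * (s * Real.sinh p) := by rw [hpdef]; ring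
        exact le_of_mul_le_mul_left h2 htpos
      set e : ℝ := Real.exp p with hedef
      have hepos : 0 < e := Real.exp_pos _
      have h3 : e * e * (s - 1) ≥ s + 1 := by
        rw [Real.cosh_eq, Real.sinh_eq, Real.exp_neg, ← hedef] at h1
        have hei : e * e⁻¹ = 1 := mul_inv_cancel₀ (ne_of_gt hepos)
        have h4 : e * e + 1 ≤ s * (e * e) - s := by
          have h5 := mul_le_mul_of_nonneg_right h1 hepos.le
          nlinarith [h5, hei]
        nlinarith
      have h6 : E * E ≤ e * e := by
        rw [hE2]
        rw [hRdef, div_le_iff₀ (by linarith : (0:ℝ) < s - 1)]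
        linarith
      have h7 : cstar ≤ p := by
        have : Real.exp (cstar + cstar) ≤ Real.exp (p + p) := by
          rw [Real.exp_add, Real.exp_add, ← hEdef, ← hedef]
          exact h6
        have := Real.exp_le_exp.1 this
        linarith
      rw [hpdef, hcstardef] at h7
      have := le_of_mul_le_mul_right (by linarith [h7] : tstar * s ≤ t * s) hs
      exact this
    have hSne : {t : ℝ | (t : ℂ) * Complex.I ∈ KAd b1 b2}.Nonempty := ⟨tstar, hmem⟩
    have hsinf : sInf {t : ℝ | (t : ℂ) * Complex.I ∈ KAd b1 b2} = tstar :=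
      le_antisymm (csInf_le ⟨tstar, hlb⟩ hmem) (le_csInf hSne hlb)
    constructor
    · rw [hsinf, htstardef]
    · intro B hInAd hq
      rw [hsinf] at hq
      obtain ⟨-, -, heqcase⟩ := key hb1 hb2 B hInAd.2 hq
      apply heqcase
      rw [show tstar * s = cstar by rw [hcstardef]; ring]
      rw [hmain, hcstardef]
      ring
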